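/- Let N ≥ 1, let H be an N × N real symmetric positive definite matrix with orthonormal eigenbasis u_1, …, u_N and eigenvalues λ_1, …, λ_N > 0, and let C be an N × N real symmetric positive semidefinite matrix. Then for every N × N real matrix Ψ with (1/N)·Ψ Ψᵀ = H and every index k, the matrix Σ(C) = (1/N)·Σ_{i=1}^N (Ψ_iᵀ C Ψ_i)·Ψ_i Ψ_iᵀ − H C H (where Ψ_i denotes the i-th column of Ψ) satisfies u_kᵀ · Σ(C) · u_k ≤ (N − 1)·λ_k·Tr(H C). -/

import Mathlib

open Matrix

/-- Upper bound on the spectral components of the mini-batch SGD gradient-noise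
covariance: if `H` is symmetric positive definite with orthonormal eigenbasis
`u_k`, eigenvalues `λ_k > 0`, `C` is symmetric PSD, and `(1/N)·ΨΨᵀ = H`, then for
`Σ(C) = (1/N)·Σ_i (Ψ_iᵀ C Ψ_i)·Ψ_i Ψ_iᵀ − HCH` one has
`u_kᵀ Σ(C) u_k ≤ (N−1)·λ_k·Tr(HC)`. -/
lemma sgd_aux_ineq (N : ℕ) (hN : 1 ≤ N) (a c : Fin N → ℝ) (g : Fin N → Fin N → ℝ)
    (hc : ∀ i, 0 ≤ c i) (hgd : ∀ i, g i i = c i)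
    (key : ∀ i j, 0 ≤ a j ^ 2 * c i + a i ^ 2 * c j + 2 * (a i * a j * g i j)) :
    (N : ℝ) * (∑ i, a i ^ 2 * c i) - (∑ i, ∑ j, a i * a j * g i j)
      ≤ ((N : ℝ) - 1) * ((∑ i, a i ^ 2) * (∑ i, c i)) := by
  have h2 : ∑ i, ∑ j, (a j ^ 2 * c i + a i ^ 2 * c j + 2 * (a i * a j * g i j))
      = (∑ i, a i ^ 2) * (∑ i, c i) + (∑ i, a i ^ 2) * (∑ i, c i)
        + 2 * ∑ i, ∑ j, a i * a j * g i j := by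
    simp only [Finset.sum_add_distrib, ← Finset.sum_mul, ← Finset.mul_sum, mul_assoc]
  have h1 : ∑ i, 4 * (a i ^ 2 * c i)
      ≤ ∑ i, ∑ j, (a j ^ 2 * c i + a i ^ 2 * c j + 2 * (a i * a j * g i j)) := by
    refine Finset.sum_le_sum fun i _ => ?_
    have := Finset.single_le_sum
      (f := fun j => a j ^ 2 * c i + a i ^ 2 * c j + 2 * (a i * a j * g i j))
      (fun j _ => key i j) (Finset.mem_univ i)
    calc 4 * (a i ^ 2 * c i)
        = a i ^ 2 * c i + a i ^ 2 * c i + 2 * (a i * a i * g i i) := by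
          rw [hgd i]; ring
      _ ≤ _ := this
  have hW : 2 * (∑ i, a i ^ 2 * c i)
      - (∑ i, a i ^ 2) * (∑ i, c i) ≤ ∑ i, ∑ j, a i * a j * g i j := by
    rw [h2, ← Finset.mul_sum] at h1; linarith
  have hXle : (∑ i, a i ^ 2 * c i) ≤ (∑ i, a i ^ 2) * (∑ i, c i) := by
    rw [Finset.sum_mul]
    refine Finset.sum_le_sum fun i _ => ?_
    exact mul_le_mul_of_nonneg_left
      (Finset.single_le_sum (fun j _ => hc j) (Finset.mem_univ i)) (sq_nonneg (a i))
  rcases Nat.lt_or_ge N 2 with hN2 | hN2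
  · have : N = 1 := by omega
    subst this
    simp only [Fin.sum_univ_one, Nat.cast_one]
    have := hgd 0
    nlinarith [sq_nonneg (a 0)]
  · have hn2 : (2 : ℝ) ≤ (N : ℝ) := by exact_mod_cast hN2
    nlinarith [mul_le_mul_of_nonneg_left hXle (by linarith : (0:ℝ) ≤ (N:ℝ) - 2)]



theorem sigma_kk_upper_bound
    (N : ℕ) (hN : 1 ≤ N)
    (H C : Matrix (Fin N) (Fin N) ℝ)
    (hHsymm : H.IsSymm) (hC : C.PosSemidef)
    (u : Fin N → Fin N → ℝ) (lam : Fin N → ℝ)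
    (horth : ∀ k l, u k ⬝ᵥ u l = if k = l then 1 else 0)
    (heig : ∀ k, H.mulVec (u k) = lam k • u k)
    (hpos : ∀ k, 0 < lam k)
    (k : Fin N)
    (Ψ : Matrix (Fin N) (Fin N) ℝ)
    (hΨ : (N : ℝ)⁻¹ • (Ψ * Ψᵀ) = H)
    (Snoise : Matrix (Fin N) (Fin N) ℝ)
    (hSnoise : Snoise = (N : ℝ)⁻¹ • ∑ i : Fin N,
        ((fun j => Ψ j i) ⬝ᵥ C.mulVec fun j => Ψ j i) •
          vecMulVec (fun j => Ψ j i) (fun j => Ψ j i)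
        - H * C * H) :
    u k ⬝ᵥ Snoise.mulVec (u k) ≤ ((N : ℝ) - 1) * lam k * (H * C).trace := by
  have hn : (0 : ℝ) < (N : ℝ) := by exact_mod_cast hN
  have hn0 : (N : ℝ) ≠ 0 := ne_of_gt hn
  set ψ : Fin N → Fin N → ℝ := fun i j => Ψ j i with hψdef
  set a : Fin N → ℝ := fun i => ψ i ⬝ᵥ u k with hadef
  set c : Fin N → ℝ := fun i => ψ i ⬝ᵥ C.mulVec (ψ i) with hcdef
  set g : Fin N → Fin N → ℝ := fun i j => ψ i ⬝ᵥ C.mulVec (ψ j) with hgdef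
  have hΨu : Ψᵀ.mulVec (u k) = a := by
    funext i
    simp [Matrix.mulVec, dotProduct, hadef, hψdef, Matrix.transpose_apply]
  have hPP : Ψ * Ψᵀ = (N : ℝ) • H := by
    rw [← hΨ, smul_smul, mul_inv_cancel₀ hn0, one_smul]
  have huu : u k ⬝ᵥ u k = 1 := by simpa using horth k k
  -- S = N * lam k
  have hS : (∑ i, a i ^ 2) = (N : ℝ) * lam k := by
    have e1 : (∑ i, a i ^ 2) = a ⬝ᵥ a := by simp [dotProduct, sq]
    have e2 : u k ⬝ᵥ (Ψ * Ψᵀ).mulVec (u k) = Ψᵀ.mulVec (u k) ⬝ᵥ Ψᵀ.mulVec (u k) := by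
      rw [← Matrix.mulVec_mulVec, Matrix.dotProduct_mulVec, ← Matrix.mulVec_transpose]
    rw [e1, ← hΨu, ← e2, hPP, Matrix.smul_mulVec, dotProduct_smul, heig,
      dotProduct_smul, huu]
    simp
  -- trace identity
  have hg : ∀ i j, (Ψᵀ * C * Ψ) i j = g i j := by
    intro i j
    simp only [Matrix.mul_apply, Matrix.transpose_apply, hgdef, hψdef, dotProduct,
      Matrix.mulVec, Finset.sum_mul, Finset.mul_sum]
    rw [Finset.sum_comm]
    refine Finset.sum_congr rfl fun p _ => Finset.sum_congr rfl fun q _ => by ring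
  have hTr : (H * C).trace = (N : ℝ)⁻¹ * (∑ i, c i) := by
    have e : H * C = (N : ℝ)⁻¹ • (Ψ * Ψᵀ * C) := by
      rw [hPP, Matrix.smul_mul, smul_smul, inv_mul_cancel₀ hn0, one_smul]
    rw [e, Matrix.trace_smul, ← Matrix.trace_mul_cycle, smul_eq_mul]
    congr 1
    simp only [Matrix.trace]
    exact Finset.sum_congr rfl fun i _ => by rw [Matrix.diag_apply, hg i i]
    -- nonnegativity of c
  have hc : ∀ i, 0 ≤ c i := by
    intro i
    simpa using hC.dotProduct_mulVec_nonneg (ψ i)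
  -- symmetry of g
  have hCs : Cᵀ = C := by
    have h1 := hC.1
    rw [← Matrix.conjTranspose_eq_transpose_of_trivial]; exact h1
  have hgsymm : ∀ i j, g j i = g i j := by
    intro i j
    have e1 : ψ j ⬝ᵥ C.mulVec (ψ i) = (C.mulVec (ψ j)) ⬝ᵥ ψ i := by
      rw [Matrix.dotProduct_mulVec]
      congr 1
      rw [← hCs, Matrix.vecMul_transpose, hCs]
    rw [hgdef]
    simp only
    rw [e1, dotProduct_comm]
  -- key pairwise PSD inequality
  have key : ∀ i j, 0 ≤ a j ^ 2 * c i + a i ^ 2 * c j + 2 * (a i * a j * g i j) := by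
    intro i j
    have h0 : 0 ≤ (a j • ψ i + a i • ψ j) ⬝ᵥ C.mulVec (a j • ψ i + a i • ψ j) := by
      simpa using hC.dotProduct_mulVec_nonneg (a j • ψ i + a i • ψ j)
    have expand : (a j • ψ i + a i • ψ j) ⬝ᵥ C.mulVec (a j • ψ i + a i • ψ j)
        = a j ^ 2 * c i + a i ^ 2 * c j + 2 * (a i * a j * g i j) := by
      have e1 : ψ i ⬝ᵥ C.mulVec (ψ i) = c i := rfl
      have e2 : ψ j ⬝ᵥ C.mulVec (ψ j) = c j := rfl
      have e3 : ψ i ⬝ᵥ C.mulVec (ψ j) = g i j := rfl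
      have e4 : ψ j ⬝ᵥ C.mulVec (ψ i) = g j i := rfl
      simp only [Matrix.mulVec_add, Matrix.mulVec_smul, dotProduct_add, add_dotProduct,
        dotProduct_smul, smul_dotProduct, smul_eq_mul, e1, e2, e3, e4, hgsymm i j]
      ring
    rw [expand] at h0
    exact h0
  -- first term of the noise matrix
  have hterm : u k ⬝ᵥ (∑ i : Fin N,
        ((fun j => Ψ j i) ⬝ᵥ C.mulVec fun j => Ψ j i) •
          vecMulVec (fun j => Ψ j i) (fun j => Ψ j i)).mulVec (u k)
      = ∑ i, a i ^ 2 * c i := by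
    have hM : (∑ i : Fin N,
        ((fun j => Ψ j i) ⬝ᵥ C.mulVec fun j => Ψ j i) •
          vecMulVec (fun j => Ψ j i) (fun j => Ψ j i))
        = ∑ i : Fin N, c i • vecMulVec (ψ i) (ψ i) := rfl
    rw [hM]
    have ea : ∀ i, a i = ∑ y, ψ i y * u k y := fun i => rfl
    have e : ∀ x, ((∑ i : Fin N, c i • vecMulVec (ψ i) (ψ i)).mulVec (u k)) x
        = ∑ i, c i * a i * ψ i x := by
      intro x
      simp only [Matrix.mulVec, dotProduct, Matrix.sum_apply, Matrix.smul_apply,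
        Matrix.vecMulVec_apply, smul_eq_mul, Finset.sum_mul]
      rw [Finset.sum_comm]
      refine Finset.sum_congr rfl fun i _ => ?_
      rw [ea i, Finset.mul_sum, Finset.sum_mul]
      exact Finset.sum_congr rfl fun y _ => by ring
    simp only [dotProduct, e, Finset.mul_sum]
    rw [Finset.sum_comm]
    refine Finset.sum_congr rfl fun i _ => ?_
    have : ∑ x, u k x * (c i * a i * ψ i x) = c i * a i * ∑ x, ψ i x * u k x := by
      rw [Finset.mul_sum]
      exact Finset.sum_congr rfl fun x _ => by ring
    rw [this, ← ea i]
    ring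
  -- HCH term
  have hHu : H.mulVec (u k) = (N : ℝ)⁻¹ • (Ψ.mulVec a) := by
    rw [← hΨ, Matrix.smul_mulVec, ← Matrix.mulVec_mulVec, hΨu]
  have hvecH : u k ᵥ* H = H.mulVec (u k) := by
    conv_lhs => rw [← hHsymm]
    rw [Matrix.vecMul_transpose]
  have hWmat : (Ψ.mulVec a) ⬝ᵥ C.mulVec (Ψ.mulVec a) = ∑ i, ∑ j, a i * a j * g i j := by
    have e1 : (Ψ.mulVec a) ⬝ᵥ C.mulVec (Ψ.mulVec a) = a ⬝ᵥ (Ψᵀ * C * Ψ).mulVec a := by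
      rw [← Matrix.mulVec_mulVec, ← Matrix.mulVec_mulVec, Matrix.dotProduct_mulVec a,
        Matrix.vecMul_transpose]
    rw [e1]
    simp only [dotProduct, Matrix.mulVec]
    refine Finset.sum_congr rfl fun i _ => ?_
    rw [Finset.mul_sum]
    refine Finset.sum_congr rfl fun j _ => ?_
    show a i * ((Ψᵀ * C * Ψ) i j * a j) = a i * a j * g i j
    rw [hg i j]; ring
  have hHCH : u k ⬝ᵥ (H * C * H).mulVec (u k)
      = (N : ℝ)⁻¹ * ((N : ℝ)⁻¹ * (∑ i, ∑ j, a i * a j * g i j)) := by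
    rw [← Matrix.mulVec_mulVec, ← Matrix.mulVec_mulVec, Matrix.dotProduct_mulVec (u k),
      hvecH, hHu]
    rw [Matrix.mulVec_smul, dotProduct_smul, smul_dotProduct, smul_eq_mul, smul_eq_mul, hWmat]
  -- put the left side together
  have hLHS : u k ⬝ᵥ Snoise.mulVec (u k)
      = (N : ℝ)⁻¹ * (∑ i, a i ^ 2 * c i)
        - (N : ℝ)⁻¹ * ((N : ℝ)⁻¹ * (∑ i, ∑ j, a i * a j * g i j)) := by
    rw [hSnoise, Matrix.sub_mulVec, dotProduct_sub, Matrix.smul_mulVec,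
      dotProduct_smul, smul_eq_mul, hterm, hHCH]
  -- final assembly
  have hlam : lam k = (N : ℝ)⁻¹ * (∑ i, a i ^ 2) := by
    rw [hS]; field_simp
  have main := sgd_aux_ineq N hN a c g hc (fun i => rfl) key
  rw [hLHS, hTr, hlam]
  calc (N : ℝ)⁻¹ * (∑ i, a i ^ 2 * c i)
        - (N : ℝ)⁻¹ * ((N : ℝ)⁻¹ * (∑ i, ∑ j, a i * a j * g i j))
      = (N : ℝ)⁻¹ * (N : ℝ)⁻¹
          * ((N : ℝ) * (∑ i, a i ^ 2 * c i) - (∑ i, ∑ j, a i * a j * g i j)) := by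
        field_simp
    _ ≤ (N : ℝ)⁻¹ * (N : ℝ)⁻¹ * (((N : ℝ) - 1) * ((∑ i, a i ^ 2) * (∑ i, c i))) := by
        exact mul_le_mul_of_nonneg_left main (by positivity)
    _ = ((N : ℝ) - 1) * ((N : ℝ)⁻¹ * (∑ i, a i ^ 2)) * ((N : ℝ)⁻¹ * (∑ i, c i)) := by
        ring
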